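/- Let ζ : [0, ∞) → ℝ be continuous and bounded with ζ(t) → q as t → ∞ for some q ∈ ℝ. Define ψ_S(x,t) = ζ(t − |x|)/(4π|x|) for 0 < |x| ≤ t and ψ_S(x,t) = 0 for |x| > t, where x ∈ ℝ³. Then for every R > 0, ∫_{|x| < R} |ψ_S(x,t) − q/(4π|x|)|² dx → 0 as t → ∞. -/

import Mathlib

open Filter MeasureTheory

lemma oneD_integrable {R : ℝ} (hR : 0 < R) :
    Integrable (Set.indicator (Set.Ioc (-R) R) (fun s : ℝ => |s| ^ (-(2:ℝ)/3))) := by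
  rw [integrable_indicator_iff measurableSet_Ioc]
  have hpos0 : IntegrableOn (fun s : ℝ => s ^ (-(2:ℝ)/3)) (Set.Ioc 0 R) := by
    have h := (intervalIntegral.intervalIntegrable_rpow' (a := 0) (b := R)
      (r := -(2:ℝ)/3) (by norm_num))
    rw [intervalIntegrable_iff, Set.uIoc_of_le hR.le] at h
    exact h
  have hpos : IntegrableOn (fun s : ℝ => |s| ^ (-(2:ℝ)/3)) (Set.Ioc 0 R) :=
    hpos0.congr_fun (fun s hs => by rw [abs_of_pos hs.1]) measurableSet_Ioc
  have hneg : IntegrableOn (fun s : ℝ => |s| ^ (-(2:ℝ)/3)) (Set.Ico (-R) 0) := by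
    have h1 : Integrable (fun s : ℝ =>
        Set.indicator (Set.Ioc 0 R) (fun s : ℝ => |s| ^ (-(2:ℝ)/3)) (-s)) :=
      ((integrable_indicator_iff measurableSet_Ioc).2 hpos).comp_neg
    have h2 : (fun s : ℝ =>
        Set.indicator (Set.Ioc 0 R) (fun s : ℝ => |s| ^ (-(2:ℝ)/3)) (-s))
        = Set.indicator (Set.Ico (-R) 0) (fun s : ℝ => |s| ^ (-(2:ℝ)/3)) := by
      funext s
      by_cases hs : s ∈ Set.Ico (-R) 0
      · rw [Set.indicator_of_mem hs, Set.indicator_of_mem (by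
          constructor <;> [linarith [hs.2]; linarith [hs.1]]), abs_neg]
      · rw [Set.indicator_of_notMem hs, Set.indicator_of_notMem (by
          intro hmem
          exact hs ⟨by linarith [hmem.2], by linarith [hmem.1]⟩)]
    rw [h2] at h1
    exact (integrable_indicator_iff measurableSet_Ico).1 h1
  have hicc : IntegrableOn (fun s : ℝ => |s| ^ (-(2:ℝ)/3)) (Set.Icc 0 R) :=
    (integrableOn_Icc_iff_integrableOn_Ioc enorm_ne_top).2 hpos
  exact (hneg.union hicc).mono_set (fun s hs => by
    rcases le_or_gt 0 s with h | h
    · exact Or.inr ⟨h, hs.2⟩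
    · exact Or.inl ⟨hs.1.le, h⟩)

lemma bound_integrable' {R : ℝ}
    (h1 : Integrable (Set.indicator (Set.Ioc (-R) R) (fun s : ℝ => |s| ^ (-(2:ℝ)/3)))) :
    Integrable (fun x : EuclideanSpace ℝ (Fin 3) =>
      ∏ i, Set.indicator (Set.Ioc (-R) R) (fun s : ℝ => |s| ^ (-(2:ℝ)/3)) (x i)) := by
  have h : Integrable (fun x : Fin 3 → ℝ =>
      ∏ i, Set.indicator (Set.Ioc (-R) R) (fun s : ℝ => |s| ^ (-(2:ℝ)/3)) (x i)) :=
    Integrable.fintype_prod (𝕜 := ℝ) (fun _ => h1)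
  exact ((EuclideanSpace.volume_preserving_symm_measurableEquiv_toLp (Fin 3)).integrable_comp_emb
    (MeasurableEquiv.toLp 2 (Fin 3 → ℝ)).symm.measurableEmbedding).2 h

lemma ae_coords_ne : ∀ᵐ x : EuclideanSpace ℝ (Fin 3), ∀ i, x i ≠ 0 := by
  have h : ∀ i : Fin 3, ∀ᵐ x : EuclideanSpace ℝ (Fin 3), x i ≠ 0 := by
    intro i
    have hker : {x : EuclideanSpace ℝ (Fin 3) | x i = 0} =
        (LinearMap.ker (EuclideanSpace.proj i : _ →L[ℝ] ℝ).toLinearMap : Set _) := by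
      ext x; simp [LinearMap.mem_ker]
    have hne : (LinearMap.ker (EuclideanSpace.proj (𝕜 := ℝ) (ι := Fin 3) i).toLinearMap) ≠ ⊤ := by
      intro htop
      have : (EuclideanSpace.single i (1:ℝ)) ∈
          LinearMap.ker (EuclideanSpace.proj (𝕜 := ℝ) (ι := Fin 3) i).toLinearMap := by
        rw [htop]; trivial
      simp [LinearMap.mem_ker] at this
    have h0 : volume {x : EuclideanSpace ℝ (Fin 3) | x i = 0} = 0 := by
      rw [hker]
      exact Measure.addHaar_submodule _ _ hne
    rw [MeasureTheory.ae_iff]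
    simpa using h0
  have := MeasureTheory.ae_all_iff.2 h
  exact this

private lemma bound_integrable'' {R : ℝ} (hR : 0 < R) :
    Integrable (fun x : EuclideanSpace ℝ (Fin 3) =>
      ∏ i, Set.indicator (Set.Ioc (-R) R) (fun s : ℝ => |s| ^ (-(2:ℝ)/3)) (x i)) :=
  bound_integrable' (oneD_integrable hR)

/-- Convergence of the outgoing spherical wave
`ψ_S(x,t) = ζ(t − |x|)/(4π|x|)` (for `|x| ≤ t`, and `0` for `|x| > t`)
to the stationary state `q/(4π|x|)` in `L²_loc(ℝ³)`. -/
theorem spherical_wave_attraction_to_stationary_state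
    (ζ : ℝ → ℝ) (q : ℝ)
    (hcont : ContinuousOn ζ (Set.Ici 0))
    (hbdd : ∃ C : ℝ, ∀ t : ℝ, 0 ≤ t → |ζ t| ≤ C)
    (hlim : Tendsto ζ atTop (nhds q)) :
    ∀ R > (0 : ℝ),
      Tendsto (fun t : ℝ =>
          ∫ x in Metric.ball (0 : EuclideanSpace ℝ (Fin 3)) R,
            |(if ‖x‖ ≤ t then ζ (t - ‖x‖) / (4 * Real.pi * ‖x‖) else 0) -
              q / (4 * Real.pi * ‖x‖)| ^ 2)
        atTop (nhds 0) := by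
  obtain ⟨C, hC⟩ := hbdd
  have hC0 : 0 ≤ C := le_trans (abs_nonneg _) (hC 0 le_rfl)
  intro R hR
  set g : ℝ → ℝ := Set.indicator (Set.Ioc (-R) R) (fun s : ℝ => |s| ^ (-(2:ℝ)/3)) with hg
  set F : ℝ → EuclideanSpace ℝ (Fin 3) → ℝ := fun t x =>
    |(if ‖x‖ ≤ t then ζ (t - ‖x‖) / (4 * Real.pi * ‖x‖) else 0) -
      q / (4 * Real.pi * ‖x‖)| ^ 2 with hF
  set bound : EuclideanSpace ℝ (Fin 3) → ℝ := fun x =>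
    ((C + |q|) / (4 * Real.pi)) ^ 2 * ∏ i, g (x i) with hbound
  -- measurability
  have hmeas : ∀ t : ℝ, AEStronglyMeasurable (F t)
      (volume.restrict (Metric.ball (0 : EuclideanSpace ℝ (Fin 3)) R)) := by
    intro t
    have hset : MeasurableSet (Metric.closedBall (0 : EuclideanSpace ℝ (Fin 3)) t \ {0}) :=
      measurableSet_closedBall.diff (measurableSet_singleton 0)
    have heq : (fun x : EuclideanSpace ℝ (Fin 3) =>
        if ‖x‖ ≤ t then ζ (t - ‖x‖) / (4 * Real.pi * ‖x‖) else 0)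
        = Set.indicator (Metric.closedBall (0 : EuclideanSpace ℝ (Fin 3)) t \ {0})
          (fun x => ζ (t - ‖x‖) / (4 * Real.pi * ‖x‖)) := by
      funext x
      by_cases hx : ‖x‖ ≤ t
      · by_cases hx0 : x = 0
        · subst hx0
          simp [Set.indicator, hx]
        · rw [if_pos hx, Set.indicator_of_mem]
          exact ⟨Metric.mem_closedBall.2 (by simpa [dist_eq_norm] using hx), hx0⟩
      · rw [if_neg hx, Set.indicator_of_notMem]
        intro hmem
        exact hx (by simpa [Metric.mem_closedBall, dist_eq_norm] using hmem.1)
    have hcont2 : ContinuousOn (fun x : EuclideanSpace ℝ (Fin 3) =>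
        ζ (t - ‖x‖) / (4 * Real.pi * ‖x‖))
        (Metric.closedBall (0 : EuclideanSpace ℝ (Fin 3)) t \ {0}) := by
      apply ContinuousOn.div
      · apply hcont.comp ((continuous_const.sub continuous_norm).continuousOn)
        intro x hx
        have hxt : ‖x‖ ≤ t := by simpa [Metric.mem_closedBall, dist_eq_norm] using hx.1
        simpa [Set.mem_Ici] using by linarith
      · exact (continuous_const.mul continuous_norm).continuousOn
      · intro x hx
        have hx0 : x ≠ 0 := by simpa using hx.2
        exact mul_ne_zero (by positivity) (norm_ne_zero_iff.2 hx0)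
    have h1 : AEStronglyMeasurable (fun x : EuclideanSpace ℝ (Fin 3) =>
        if ‖x‖ ≤ t then ζ (t - ‖x‖) / (4 * Real.pi * ‖x‖) else 0) volume := by
      rw [heq]
      exact (aestronglyMeasurable_indicator_iff hset).2 (hcont2.aestronglyMeasurable hset)
    have h2 : AEStronglyMeasurable (fun x : EuclideanSpace ℝ (Fin 3) =>
        q / (4 * Real.pi * ‖x‖)) volume :=
      (measurable_const.div (measurable_const.mul measurable_norm)).aestronglyMeasurable
    have habs : Continuous fun y : ℝ => |y| ^ 2 := (continuous_abs.pow 2)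
    exact ((habs.comp_aestronglyMeasurable (h1.sub h2)).restrict)
  -- the bound is integrable
  have hbint : Integrable bound
      (volume.restrict (Metric.ball (0 : EuclideanSpace ℝ (Fin 3)) R)) :=
    ((bound_integrable'' hR).const_mul _).restrict
  -- pointwise bound
  have h_bound : ∀ t : ℝ, ∀ᵐ x ∂(volume.restrict (Metric.ball (0 : EuclideanSpace ℝ (Fin 3)) R)),
      ‖F t x‖ ≤ bound x := by
    intro t
    filter_upwards [ae_restrict_mem measurableSet_ball, ae_restrict_of_ae ae_coords_ne]
      with x hxR hxc
    have hx0 : x ≠ 0 := fun h => hxc 0 (by rw [h]; rfl)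
    have hxpos : 0 < ‖x‖ := norm_pos_iff.2 hx0
    have hxlt : ‖x‖ < R := by simpa [dist_eq_norm] using hxR
    have hden : 0 < 4 * Real.pi * ‖x‖ := mul_pos (by positivity) hxpos
    have hA : |(if ‖x‖ ≤ t then ζ (t - ‖x‖) / (4 * Real.pi * ‖x‖) else 0) -
        q / (4 * Real.pi * ‖x‖)| ≤ (C + |q|) / (4 * Real.pi * ‖x‖) := by
      by_cases h : ‖x‖ ≤ t
      · rw [if_pos h, div_sub_div_same, abs_div, abs_of_pos hden]
        have hnum : |ζ (t - ‖x‖) - q| ≤ C + |q| := by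
          have h1 : |ζ (t - ‖x‖) - q| ≤ |ζ (t - ‖x‖)| + |q| := by
            rw [sub_eq_add_neg]
            exact (abs_add_le _ _).trans (by rw [abs_neg])
          have h2 := hC (t - ‖x‖) (by linarith)
          linarith
        gcongr
      · rw [if_neg h, zero_sub, abs_neg, abs_div, abs_of_pos hden]
        gcongr
        exact le_add_of_nonneg_left hC0
    have hcoord : ∀ i, |x i| ≤ ‖x‖ := by
      intro i
      calc |x i| = Real.sqrt (‖x i‖ ^ 2) := by
            rw [Real.norm_eq_abs, Real.sqrt_sq_eq_abs, abs_abs]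
        _ ≤ Real.sqrt (∑ j, ‖x j‖ ^ 2) :=
            Real.sqrt_le_sqrt (Finset.single_le_sum (f := fun j => ‖x j‖ ^ 2)
              (fun j _ => sq_nonneg _) (Finset.mem_univ i))
        _ = ‖x‖ := (EuclideanSpace.norm_eq x).symm
    have hgi : ∀ i, g (x i) = |x i| ^ (-(2:ℝ)/3) := by
      intro i
      rw [hg, Set.indicator_of_mem]
      constructor
      · exact neg_lt_of_abs_lt ((hcoord i).trans_lt hxlt)
      · exact (le_abs_self _).trans ((hcoord i).trans hxlt.le)
    have hprodpos : 0 < ∏ i, |x i| :=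
      Finset.prod_pos fun i _ => abs_pos.2 (hxc i)
    have hprodle : ∏ i, |x i| ≤ ‖x‖ ^ 3 := by
      calc ∏ i, |x i| ≤ ∏ _i : Fin 3, ‖x‖ :=
            Finset.prod_le_prod (fun i _ => abs_nonneg _) (fun i _ => hcoord i)
        _ = ‖x‖ ^ 3 := by simp [Finset.prod_const]
    have hD : (‖x‖ ^ 2)⁻¹ ≤ ∏ i, g (x i) := by
      have key : (∏ i, |x i|) ^ ((2:ℝ)/3) ≤ ‖x‖ ^ 2 := by
        calc (∏ i, |x i|) ^ ((2:ℝ)/3) ≤ (‖x‖ ^ 3) ^ ((2:ℝ)/3) :=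
              Real.rpow_le_rpow hprodpos.le hprodle (by norm_num)
          _ = ‖x‖ ^ 2 := by
              rw [← Real.rpow_natCast ‖x‖ 3, ← Real.rpow_mul (norm_nonneg _),
                ← Real.rpow_natCast ‖x‖ 2]
              norm_num
      have hrpos : 0 < (∏ i, |x i|) ^ ((2:ℝ)/3) := Real.rpow_pos_of_pos hprodpos _
      calc (‖x‖ ^ 2)⁻¹ ≤ ((∏ i, |x i|) ^ ((2:ℝ)/3))⁻¹ := by
            apply inv_anti₀ hrpos key
        _ = (∏ i, |x i|) ^ (-(2:ℝ)/3) := by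
            rw [neg_div, Real.rpow_neg hprodpos.le]
        _ = ∏ i, |x i| ^ (-(2:ℝ)/3) := by
            rw [Real.finset_prod_rpow _ _ (fun i _ => abs_nonneg _)]
        _ = ∏ i, g (x i) := by
            exact Finset.prod_congr rfl (fun i _ => (hgi i).symm)
    have hnn : 0 ≤ F t x := by rw [hF]; positivity
    rw [Real.norm_eq_abs, abs_of_nonneg hnn, hF]
    calc |(if ‖x‖ ≤ t then ζ (t - ‖x‖) / (4 * Real.pi * ‖x‖) else 0) -
          q / (4 * Real.pi * ‖x‖)| ^ 2
        ≤ ((C + |q|) / (4 * Real.pi * ‖x‖)) ^ 2 := by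
          apply pow_le_pow_left₀ (abs_nonneg _) hA
      _ = ((C + |q|) / (4 * Real.pi)) ^ 2 * (‖x‖ ^ 2)⁻¹ := by
          ring
      _ ≤ ((C + |q|) / (4 * Real.pi)) ^ 2 * ∏ i, g (x i) := by
          apply mul_le_mul_of_nonneg_left hD (by positivity)
      _ = bound x := rfl
  -- pointwise limit
  have h_lim : ∀ᵐ x ∂(volume.restrict (Metric.ball (0 : EuclideanSpace ℝ (Fin 3)) R)),
      Tendsto (fun t => F t x) atTop (nhds 0) := by
    filter_upwards [ae_restrict_of_ae ae_coords_ne] with x hxc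
    have hx0 : x ≠ 0 := fun h => hxc 0 (by rw [h]; rfl)
    have h1 : Tendsto (fun t => ζ (t - ‖x‖)) atTop (nhds q) := by
      have := hlim.comp (tendsto_atTop_add_const_right atTop (-‖x‖) tendsto_id)
      simpa [Function.comp_def, sub_eq_add_neg] using this
    have h2 : Tendsto (fun t => |ζ (t - ‖x‖) / (4 * Real.pi * ‖x‖) -
        q / (4 * Real.pi * ‖x‖)| ^ 2) atTop (nhds 0) := by
      have := (((h1.div_const (4 * Real.pi * ‖x‖)).sub
        (tendsto_const_nhds (x := q / (4 * Real.pi * ‖x‖)))).abs).pow 2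
      simpa using this
    apply h2.congr'
    filter_upwards [eventually_ge_atTop ‖x‖] with t ht
    rw [hF]
    simp only [if_pos ht]
  have := tendsto_integral_filter_of_dominated_convergence (f := fun _ => (0:ℝ)) bound
    (Eventually.of_forall hmeas) (Eventually.of_forall h_bound) hbint
    (h_lim.mono fun x hx => by simpa using hx)
  simp only [integral_zero] at this
  exact this
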